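/- arXiv:1308.2454 — 3 statements merged into one kernel-verified Lean document; each statement's English description precedes it below -/
import Mathlib

section
/- For real numbers γ > 2, T > 0, ρ > 0, R > 0, the double integral V = ∫_0^∞ 2π r₁ ∫_0^R (Tρ r₂^γ / r₁^γ) / (Tρ r₂^γ / r₁^γ + 1) · 2π r₂ dr₂ dr₁ satisfies V ≤ 4π²R⁴(Tρ)^{2/γ} (1/8 + 1/(4(γ+2)) + 1/((γ+2)(γ−2))). -/
open Real MeasureTheory Set

/-- The integral of the `min`-majorant over the femtocell disk radius. -/
lemma min_integral_eval (γ a R r₁ : ℝ) (hγ : 2 < γ) (ha : 0 < a) (hR : 0 < R)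
    (hr : 0 < r₁) :
    ∫ r₂ in Set.Ioc (0:ℝ) R, min 1 (a * r₂ ^ γ / r₁ ^ γ) * (2 * π * r₂)
      = if r₁ ≤ a ^ (1/γ) * R then
          2*π*(r₁/a^(1/γ))^2/(γ+2) + π*(R^2-(r₁/a^(1/γ))^2)
        else 2*π*a*R^(γ+2)/((γ+2)*r₁^γ) := by
  have hγ0 : (0:ℝ) < γ := by linarith
  set c : ℝ := a ^ (1/γ) with hc
  have hc0 : 0 < c := rpow_pos_of_pos ha _
  have hcγ : c ^ γ = a := by
    rw [hc, ← Real.rpow_mul ha.le, one_div, inv_mul_cancel₀ hγ0.ne', rpow_one]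
  have hr₁γ : 0 < r₁ ^ γ := rpow_pos_of_pos hr _
  set s : ℝ := r₁ / c with hs
  have hs0 : 0 < s := div_pos hr hc0
  have hsγ : a * s ^ γ = r₁ ^ γ := by
    rw [hs, Real.div_rpow hr.le hc0.le, hcγ]
    field_simp
  have hcont : Continuous fun x : ℝ => min 1 (a * x ^ γ / r₁ ^ γ) * (2 * π * x) := by
    apply Continuous.mul
    · exact continuous_const.min ((continuous_const.mul (Real.continuous_rpow_const hγ0.le)).div_const _)
    · continuity
  rw [← intervalIntegral.integral_of_le hR.le]
  by_cases hcase : r₁ ≤ c * R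
  · have hsR : s ≤ R := by
      rw [hs, div_le_iff₀ hc0]; linarith [hcase, mul_comm c R]
    rw [if_pos hcase]
    rw [← intervalIntegral.integral_add_adjacent_intervals
      (hcont.intervalIntegrable 0 s) (hcont.intervalIntegrable s R)]
    have e1 : (∫ x in (0:ℝ)..s, min 1 (a * x ^ γ / r₁ ^ γ) * (2 * π * x))
        = ∫ x in (0:ℝ)..s, (2*π*a/r₁^γ) * x ^ (γ+1) := by
      apply intervalIntegral.integral_congr
      intro x hx
      rw [uIcc_of_le hs0.le] at hx
      dsimp only
      rcases eq_or_lt_of_le hx.1 with h0 | h0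
      · simp only [← h0]
        rw [Real.zero_rpow hγ0.ne', Real.zero_rpow (by linarith : γ + 1 ≠ 0)]
        simp
      · have hxγ : a * x ^ γ ≤ r₁ ^ γ := by
          rw [← hsγ]
          exact mul_le_mul_of_nonneg_left
            (Real.rpow_le_rpow h0.le hx.2 hγ0.le) ha.le
        rw [min_eq_right ((div_le_one hr₁γ).2 hxγ), Real.rpow_add_one h0.ne' γ]
        ring
    have e2 : (∫ x in s..R, min 1 (a * x ^ γ / r₁ ^ γ) * (2 * π * x))
        = ∫ x in s..R, 2*π*x := by
      apply intervalIntegral.integral_congr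
      intro x hx
      rw [uIcc_of_le hsR] at hx
      dsimp only
      have hxγ : r₁ ^ γ ≤ a * x ^ γ := by
        rw [← hsγ]
        exact mul_le_mul_of_nonneg_left (Real.rpow_le_rpow hs0.le hx.1 hγ0.le) ha.le
      rw [min_eq_left ((one_le_div hr₁γ).2 hxγ), one_mul]
    rw [e1, e2, intervalIntegral.integral_const_mul,
      integral_rpow (Or.inl (by linarith : (-1:ℝ) < γ+1))]
    have e3 : (∫ x in s..R, 2*π*x) = 2*π * ((R^2 - s^2)/2) := by
      have : (fun x : ℝ => 2*π*x) = fun x : ℝ => (2*π) * x := by funext x; ring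
      rw [this, intervalIntegral.integral_const_mul, integral_id]
    rw [e3, Real.zero_rpow (by linarith : γ + 1 + 1 ≠ 0)]
    have hsp : s ^ (γ + 1 + 1) = s ^ γ * s ^ (2:ℕ) := by
      rw [show γ + 1 + 1 = γ + 2 by ring, Real.rpow_add hs0, Real.rpow_two]
    rw [hsp]
    have hkey : 2*π*a/r₁^γ * ((s ^ γ * s ^ (2:ℕ) - 0) / (γ + 1 + 1)) = 2*π*s^2/(γ+2) := by
      have h' : a * s ^ γ = r₁ ^ γ := hsγ
      field_simp
      linear_combination s^2*(γ+2)*h'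
    rw [hkey]
    ring
  · rw [if_neg hcase]
    have hRs : R ≤ s := by
      rw [hs, le_div_iff₀ hc0]
      nlinarith [not_le.mp hcase]
    have e1 : (∫ x in (0:ℝ)..R, min 1 (a * x ^ γ / r₁ ^ γ) * (2 * π * x))
        = ∫ x in (0:ℝ)..R, (2*π*a/r₁^γ) * x ^ (γ+1) := by
      apply intervalIntegral.integral_congr
      intro x hx
      rw [uIcc_of_le hR.le] at hx
      dsimp only
      rcases eq_or_lt_of_le hx.1 with h0 | h0
      · simp only [← h0]
        rw [Real.zero_rpow hγ0.ne', Real.zero_rpow (by linarith : γ + 1 ≠ 0)]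
        simp
      · have hxγ : a * x ^ γ ≤ r₁ ^ γ := by
          rw [← hsγ]
          exact mul_le_mul_of_nonneg_left
            (Real.rpow_le_rpow h0.le (hx.2.trans hRs) hγ0.le) ha.le
        rw [min_eq_right ((div_le_one hr₁γ).2 hxγ), Real.rpow_add_one h0.ne' γ]
        ring
    rw [e1, intervalIntegral.integral_const_mul,
      integral_rpow (Or.inl (by linarith : (-1:ℝ) < γ+1)),
      Real.zero_rpow (by linarith : γ + 1 + 1 ≠ 0)]
    rw [show γ + 1 + 1 = γ + 2 by ring]
    field_simp
    ring


/-- Majorant for the outer integrand. -/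
noncomputable def stmtPsi (γ a c R r₁ : ℝ) : ℝ :=
  2 * π * r₁ * (if r₁ ≤ c * R then
        2*π*(r₁/c)^2/(γ+2) + π*(R^2-(r₁/c)^2)
      else 2*π*a*R^(γ+2)/((γ+2)*r₁^γ))

set_option maxHeartbeats 1000000 in
theorem stmt_1 (γ T ρ R : ℝ) (hγ : 2 < γ) (hT : 0 < T) (hρ : 0 < ρ) (hR : 0 < R) :
    (∫ r₁ in Set.Ioi (0:ℝ), 2 * π * r₁ *
        ∫ r₂ in Set.Ioc (0:ℝ) R,
          (T * ρ * r₂ ^ γ / r₁ ^ γ) / (T * ρ * r₂ ^ γ / r₁ ^ γ + 1) * (2 * π * r₂))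
      ≤ 4 * π ^ 2 * R ^ 4 * (T * ρ) ^ (2 / γ) *
        (1/8 + 1/(4*(γ+2)) + 1/((γ+2)*(γ-2))) := by
  have hγ0 : (0:ℝ) < γ := by linarith
  set a : ℝ := T * ρ with ha
  have ha0 : 0 < a := mul_pos hT hρ
  set c : ℝ := a ^ (1/γ) with hc
  have hc0 : 0 < c := rpow_pos_of_pos ha0 _
  have hcγ : c ^ γ = a := by
    rw [hc, ← Real.rpow_mul ha0.le, one_div, inv_mul_cancel₀ hγ0.ne', rpow_one]
  have hcR : 0 < c * R := mul_pos hc0 hR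
  have hΨ : ∀ r₁, stmtPsi γ a c R r₁ = 2 * π * r₁ * (if r₁ ≤ c * R then
          2*π*(r₁/c)^2/(γ+2) + π*(R^2-(r₁/c)^2)
        else 2*π*a*R^(γ+2)/((γ+2)*r₁^γ)) := fun _ => rfl
  -- pointwise bound
  have hbound : ∀ r₁ ∈ Ioi (0:ℝ),
      (2 * π * r₁ * ∫ r₂ in Set.Ioc (0:ℝ) R,
          (a * r₂ ^ γ / r₁ ^ γ) / (a * r₂ ^ γ / r₁ ^ γ + 1) * (2 * π * r₂)) ≤ stmtPsi γ a c R r₁ := by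
    intro r₁ hr₁
    rw [mem_Ioi] at hr₁
    have hr₁γ : 0 < r₁ ^ γ := rpow_pos_of_pos hr₁ _
    have inner_le : (∫ r₂ in Set.Ioc (0:ℝ) R,
        (a * r₂ ^ γ / r₁ ^ γ) / (a * r₂ ^ γ / r₁ ^ γ + 1) * (2 * π * r₂))
        ≤ ∫ r₂ in Set.Ioc (0:ℝ) R, min 1 (a * r₂ ^ γ / r₁ ^ γ) * (2 * π * r₂) := by
      apply integral_mono_of_nonneg
      · filter_upwards [ae_restrict_mem measurableSet_Ioc] with x hx
        have hx0 : 0 < x := hx.1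
        positivity
      · apply (Continuous.mul ?_ ?_).integrableOn_Ioc
        · exact continuous_const.min
            ((continuous_const.mul (Real.continuous_rpow_const hγ0.le)).div_const _)
        · continuity
      · filter_upwards [ae_restrict_mem measurableSet_Ioc] with x hx
        have hx0 : 0 < x := hx.1
        have hq : 0 ≤ a * x ^ γ / r₁ ^ γ := by positivity
        have h1 : (a * x ^ γ / r₁ ^ γ) / (a * x ^ γ / r₁ ^ γ + 1)
            ≤ min 1 (a * x ^ γ / r₁ ^ γ) := by
          apply le_min
          · rw [div_le_one (by linarith)]; linarith
          · exact div_le_self hq (by linarith)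
        exact mul_le_mul_of_nonneg_right h1 (by positivity)
    rw [min_integral_eval γ a R r₁ hγ ha0 hR hr₁, ← hc] at inner_le
    exact mul_le_mul_of_nonneg_left inner_le (by positivity)
  -- integrability of Ψ on pieces
  have hΨ1eq : Set.EqOn (fun x : ℝ => 2 * π * x * (2*π*(x/c)^2/(γ+2) + π*(R^2-(x/c)^2))) (stmtPsi γ a c R)
      (Ioc 0 (c*R)) := by
    intro x hx
    dsimp only
    rw [hΨ, if_pos hx.2]
  have hΨ1 : IntegrableOn (stmtPsi γ a c R) (Ioc 0 (c*R)) := by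
    apply IntegrableOn.congr_fun _ hΨ1eq measurableSet_Ioc
    apply Continuous.integrableOn_Ioc
    continuity
  set K : ℝ := 4*π^2*a*R^(γ+2)/(γ+2) with hK
  have hΨ2eq : Set.EqOn (fun x : ℝ => K * x ^ (1-γ)) (stmtPsi γ a c R) (Ioi (c*R)) := by
    intro x hx
    rw [mem_Ioi] at hx
    have hx0 : 0 < x := hcR.trans hx
    have hxγ : 0 < x ^ γ := rpow_pos_of_pos hx0 _
    dsimp only
    rw [hΨ, if_neg (not_le.mpr hx), hK]
    rw [show (1:ℝ) - γ = 1 + -γ by ring, Real.rpow_add hx0, Real.rpow_one,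
      Real.rpow_neg hx0.le]
    field_simp
    ring
  have hΨ2 : IntegrableOn (stmtPsi γ a c R) (Ioi (c*R)) := by
    apply IntegrableOn.congr_fun _ hΨ2eq measurableSet_Ioi
    exact (integrableOn_Ioi_rpow_of_lt (by linarith : 1 - γ < -1) hcR).const_mul K
  have hsplit : Ioc (0:ℝ) (c*R) ∪ Ioi (c*R) = Ioi 0 := Ioc_union_Ioi_eq_Ioi hcR.le
  have hΨint : IntegrableOn (stmtPsi γ a c R) (Ioi 0) := by
    rw [← hsplit]; exact hΨ1.union hΨ2
  -- main comparison
  have hmain : (∫ r₁ in Set.Ioi (0:ℝ), 2 * π * r₁ *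
        ∫ r₂ in Set.Ioc (0:ℝ) R,
          (a * r₂ ^ γ / r₁ ^ γ) / (a * r₂ ^ γ / r₁ ^ γ + 1) * (2 * π * r₂))
      ≤ ∫ r₁ in Set.Ioi (0:ℝ), stmtPsi γ a c R r₁ := by
    refine integral_mono_of_nonneg ?_ hΨint ?_
    · filter_upwards [ae_restrict_mem measurableSet_Ioi] with r₁ hr₁
      rw [mem_Ioi] at hr₁
      have hr₁γ : 0 < r₁ ^ γ := rpow_pos_of_pos hr₁ _
      apply mul_nonneg (by positivity)
      apply setIntegral_nonneg measurableSet_Ioc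
      intro x hx
      have hx0 : 0 < x := hx.1
      positivity
    · filter_upwards [ae_restrict_mem measurableSet_Ioi] with r₁ hr₁
      exact hbound r₁ hr₁
  -- compute ∫ Ψ
  have hval1 : (∫ r₁ in Ioc (0:ℝ) (c*R), stmtPsi γ a c R r₁)
      = (4*π^2/((γ+2)*c^2) - 2*π^2/c^2) * ((c*R)^4)/4 + (2*π^2*R^2) * ((c*R)^2)/2 := by
    rw [← setIntegral_congr_fun measurableSet_Ioc hΨ1eq,
      ← intervalIntegral.integral_of_le hcR.le]
    have heq : (fun x : ℝ => 2 * π * x * (2*π*(x/c)^2/(γ+2) + π*(R^2-(x/c)^2)))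
        = fun x : ℝ => (4*π^2/((γ+2)*c^2) - 2*π^2/c^2) * x^3 + (2*π^2*R^2) * x := by
      funext x
      field_simp
      ring
    rw [heq, intervalIntegral.integral_add
      ((intervalIntegral.intervalIntegrable_pow 3).const_mul _)
      (intervalIntegral.intervalIntegrable_id.const_mul _),
      intervalIntegral.integral_const_mul, intervalIntegral.integral_const_mul,
      integral_pow, integral_id]
    norm_num
    ring
  have hval2 : (∫ r₁ in Ioi (c*R), stmtPsi γ a c R r₁) = K * ((c*R) ^ (2-γ) / (γ-2)) := by
    rw [← setIntegral_congr_fun measurableSet_Ioi hΨ2eq, MeasureTheory.integral_const_mul,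
      integral_Ioi_rpow_of_lt (by linarith : 1 - γ < -1) hcR]
    rw [show (1:ℝ) - γ + 1 = 2 - γ by ring]
    have h2 : (2:ℝ) - γ ≠ 0 := by linarith
    have h3 : γ - 2 ≠ 0 := by linarith
    field_simp
    ring
  have hc2 : c^2 = a ^ (2/γ) := by
    rw [hc, ← Real.rpow_natCast (a ^ (1/γ)) 2, ← Real.rpow_mul ha0.le]
    congr 1
    push_cast
    ring
  have hpow : a * R^(γ+2) * (c*R) ^ (2-γ) = c^2 * R^4 := by
    rw [Real.mul_rpow hc0.le hR.le, ← hcγ]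
    rw [show c ^ γ * R ^ (γ + 2) * (c ^ (2 - γ) * R ^ (2 - γ))
      = (c ^ γ * c ^ (2-γ)) * (R ^ (γ+2) * R ^ (2-γ)) by ring,
      ← Real.rpow_add hc0, ← Real.rpow_add hR,
      show γ + (2 - γ) = 2 by ring, show γ + 2 + (2 - γ) = 4 by ring,
      show (2:ℝ) = ((2:ℕ):ℝ) by norm_num, show (4:ℝ) = ((4:ℕ):ℝ) by norm_num,
      Real.rpow_natCast, Real.rpow_natCast]
  calc (∫ r₁ in Set.Ioi (0:ℝ), 2 * π * r₁ *
        ∫ r₂ in Set.Ioc (0:ℝ) R,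
          (T * ρ * r₂ ^ γ / r₁ ^ γ) / (T * ρ * r₂ ^ γ / r₁ ^ γ + 1) * (2 * π * r₂))
      ≤ ∫ r₁ in Set.Ioi (0:ℝ), stmtPsi γ a c R r₁ := hmain
    _ = (∫ r₁ in Ioc (0:ℝ) (c*R), stmtPsi γ a c R r₁) + ∫ r₁ in Ioi (c*R), stmtPsi γ a c R r₁ := by
        rw [← hsplit, setIntegral_union (Ioc_disjoint_Ioi le_rfl) measurableSet_Ioi hΨ1 hΨ2]
    _ = 4 * π ^ 2 * R ^ 4 * (T * ρ) ^ (2 / γ) *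
        (1/8 + 1/(4*(γ+2)) + 1/((γ+2)*(γ-2))) := by
        rw [hval1, hval2, hK, ← ha, ← hc2]
        have hne2 : (γ:ℝ) + 2 ≠ 0 := by linarith
        have hne3 : (γ:ℝ) - 2 ≠ 0 := by linarith
        have h1 : 4*π^2*a*R^(γ+2)/(γ+2) * ((c*R) ^ (2-γ) / (γ-2))
            = 4*π^2*(c^2*R^4)/((γ+2)*(γ-2)) := by
          field_simp
          linear_combination hpow
        rw [h1]
        field_simp
        ring
end

section
/- For real numbers γ > 2, T > 0, ρ > 0, R > 0, the double integral V = ∫_0^∞ 2π r₁ ∫_0^R (Tρ r₂^γ / r₁^γ) / (Tρ r₂^γ / r₁^γ + 1) · 2π r₂ dr₂ dr₁ satisfies V ≥ 2π²R⁴(Tρ)^{2/γ} (1/8 + 1/(4(γ+2)) + 1/((γ+2)(γ−2))). -/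
open Real MeasureTheory

open Set

lemma stmt2_cont_rpow (γ : ℝ) (hγ : 0 ≤ γ) : Continuous fun x : ℝ => x ^ γ :=
  Real.continuous_rpow_const hγ

lemma stmt2_psi_contOn (γ k r₁ : ℝ) (hγ : 0 < γ) (hk : 0 ≤ k) (hr₁ : 0 < r₁)
    (s : Set ℝ) (hs : s ⊆ Ici 0) :
    ContinuousOn
      (fun r₂ : ℝ => (k * r₂ ^ γ / r₁ ^ γ) / (k * r₂ ^ γ / r₁ ^ γ + 1) * (2 * π * r₂)) s := by
  have hr₁γ : (0:ℝ) < r₁ ^ γ := Real.rpow_pos_of_pos hr₁ γ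
  have h1 : ContinuousOn (fun r₂ : ℝ => k * r₂ ^ γ / r₁ ^ γ) s :=
    ((continuous_const.mul (stmt2_cont_rpow γ hγ.le)).div_const _).continuousOn
  have h2 : ∀ x ∈ s, k * x ^ γ / r₁ ^ γ + 1 ≠ 0 := by
    intro x hx
    have hx0 : (0:ℝ) ≤ x := hs hx
    have : (0:ℝ) ≤ k * x ^ γ / r₁ ^ γ :=
      div_nonneg (mul_nonneg hk (Real.rpow_nonneg hx0 _)) hr₁γ.le
    linarith
  exact (h1.div (h1.add continuousOn_const) h2).mul
    ((continuous_const.mul continuous_id).continuousOn)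

lemma stmt2_piece1 (γ k r₁ c : ℝ) (hγ : 2 < γ) (hk : 0 < k) (hr₁ : 0 < r₁)
    (hc : 0 ≤ c) (hcle : k * c ^ γ ≤ r₁ ^ γ) :
    π * k * c ^ (γ + 2) / ((γ + 2) * r₁ ^ γ) ≤
      ∫ r₂ in (0:ℝ)..c,
        (k * r₂ ^ γ / r₁ ^ γ) / (k * r₂ ^ γ / r₁ ^ γ + 1) * (2 * π * r₂) := by
  have hγ0 : (0:ℝ) < γ := by linarith
  have hr₁γ : (0:ℝ) < r₁ ^ γ := Real.rpow_pos_of_pos hr₁ γ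
  have hint1 : IntervalIntegrable (fun x : ℝ => π * k / r₁ ^ γ * x ^ (γ + 1)) volume 0 c :=
    (continuous_const.mul (stmt2_cont_rpow _ (by linarith))).intervalIntegrable _ _
  have hint2 : IntervalIntegrable
      (fun r₂ : ℝ => (k * r₂ ^ γ / r₁ ^ γ) / (k * r₂ ^ γ / r₁ ^ γ + 1) * (2 * π * r₂))
      volume 0 c := by
    apply (stmt2_psi_contOn γ k r₁ hγ0 hk.le hr₁ _ ?_).intervalIntegrable
    rw [Set.uIcc_of_le hc]
    exact fun x hx => hx.1
  have hmono : ∀ x ∈ Icc (0:ℝ) c,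
      π * k / r₁ ^ γ * x ^ (γ + 1) ≤
        (k * x ^ γ / r₁ ^ γ) / (k * x ^ γ / r₁ ^ γ + 1) * (2 * π * x) := by
    intro x hx
    rcases eq_or_lt_of_le hx.1 with h | h
    · rw [← h]
      simp [Real.zero_rpow (by linarith : γ + 1 ≠ 0), Real.zero_rpow hγ0.ne']
    · have hx0 : (0:ℝ) ≤ x := hx.1
      have hxγ : x ^ γ ≤ c ^ γ := Real.rpow_le_rpow hx0 hx.2 hγ0.le
      have hX0 : (0:ℝ) ≤ k * x ^ γ / r₁ ^ γ :=
        div_nonneg (mul_nonneg hk.le (Real.rpow_nonneg hx0 _)) hr₁γ.le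
      have hX1 : k * x ^ γ / r₁ ^ γ ≤ 1 := by
        rw [div_le_one hr₁γ]
        nlinarith
      have hfrac : (k * x ^ γ / r₁ ^ γ) / 2 ≤
          (k * x ^ γ / r₁ ^ γ) / (k * x ^ γ / r₁ ^ γ + 1) := by
        gcongr
        all_goals linarith
      have hxpow : x ^ (γ + 1) = x ^ γ * x := Real.rpow_add_one h.ne' γ
      have key : π * k / r₁ ^ γ * x ^ (γ + 1) =
          (k * x ^ γ / r₁ ^ γ) / 2 * (2 * π * x) := by
        rw [hxpow]; field_simp
      rw [key]
      exact mul_le_mul_of_nonneg_right hfrac (by positivity)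
  have hle := intervalIntegral.integral_mono_on hc hint1 hint2 hmono
  rw [intervalIntegral.integral_const_mul,
    integral_rpow (Or.inl (by linarith : (-1:ℝ) < γ + 1))] at hle
  rw [Real.zero_rpow (by linarith : γ + 1 + 1 ≠ 0)] at hle
  have h22 : γ + 1 + 1 = γ + 2 := by ring
  rw [h22] at hle
  calc π * k * c ^ (γ + 2) / ((γ + 2) * r₁ ^ γ)
      = π * k / r₁ ^ γ * ((c ^ (γ + 2) - 0) / (γ + 2)) := by
        rw [sub_zero]
        field_simp
    _ ≤ _ := hle

lemma stmt2_piece2 (γ k r₁ c R : ℝ) (hγ : 0 < γ) (hk : 0 < k) (hr₁ : 0 < r₁)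
    (hc : 0 < c) (hcR : c ≤ R) (hge : r₁ ^ γ ≤ k * c ^ γ) :
    π * (R ^ 2 - c ^ 2) / 2 ≤
      ∫ r₂ in c..R,
        (k * r₂ ^ γ / r₁ ^ γ) / (k * r₂ ^ γ / r₁ ^ γ + 1) * (2 * π * r₂) := by
  have hr₁γ : (0:ℝ) < r₁ ^ γ := Real.rpow_pos_of_pos hr₁ γ
  have hint1 : IntervalIntegrable (fun x : ℝ => π * x) volume c R :=
    (continuous_const.mul continuous_id).intervalIntegrable _ _
  have hint2 : IntervalIntegrable
      (fun r₂ : ℝ => (k * r₂ ^ γ / r₁ ^ γ) / (k * r₂ ^ γ / r₁ ^ γ + 1) * (2 * π * r₂))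
      volume c R := by
    apply (stmt2_psi_contOn γ k r₁ hγ hk.le hr₁ _ ?_).intervalIntegrable
    rw [Set.uIcc_of_le hcR]
    exact fun x hx => le_trans hc.le hx.1
  have hmono : ∀ x ∈ Icc c R,
      π * x ≤ (k * x ^ γ / r₁ ^ γ) / (k * x ^ γ / r₁ ^ γ + 1) * (2 * π * x) := by
    intro x hx
    have hx0 : (0:ℝ) < x := lt_of_lt_of_le hc hx.1
    have hxγ : c ^ γ ≤ x ^ γ := Real.rpow_le_rpow hc.le hx.1 hγ.le
    have hX1 : (1:ℝ) ≤ k * x ^ γ / r₁ ^ γ := by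
      rw [le_div_iff₀ hr₁γ]
      nlinarith
    have hfrac : (1:ℝ) / 2 ≤ (k * x ^ γ / r₁ ^ γ) / (k * x ^ γ / r₁ ^ γ + 1) := by
      rw [div_le_div_iff₀ (by norm_num) (by linarith)]
      linarith
    calc π * x = 1 / 2 * (2 * π * x) := by ring
      _ ≤ _ := mul_le_mul_of_nonneg_right hfrac (by positivity)
  have hle := intervalIntegral.integral_mono_on hcR hint1 hint2 hmono
  rw [intervalIntegral.integral_const_mul, integral_id] at hle
  calc π * (R ^ 2 - c ^ 2) / 2 = π * ((R ^ 2 - c ^ 2) / 2) := by ring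
    _ ≤ _ := hle

lemma stmt2_inner_integrable (γ k r₁ R : ℝ) (hγ : 0 < γ) (hk : 0 < k) (hr₁ : 0 < r₁)
    (hR : 0 < R) :
    IntegrableOn
      (fun r₂ : ℝ => (k * r₂ ^ γ / r₁ ^ γ) / (k * r₂ ^ γ / r₁ ^ γ + 1) * (2 * π * r₂))
      (Ioc 0 R) := by
  rw [← intervalIntegrable_iff_integrableOn_Ioc_of_le hR.le]
  apply (stmt2_psi_contOn γ k r₁ hγ hk.le hr₁ _ ?_).intervalIntegrable
  rw [Set.uIcc_of_le hR.le]
  exact fun x hx => hx.1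

lemma stmt2_inner_le_const (γ k r₁ R : ℝ) (hγ : 0 < γ) (hk : 0 < k) (hr₁ : 0 < r₁)
    (hR : 0 < R) :
    (∫ r₂ in Ioc (0:ℝ) R,
      (k * r₂ ^ γ / r₁ ^ γ) / (k * r₂ ^ γ / r₁ ^ γ + 1) * (2 * π * r₂)) ≤ π * R ^ 2 := by
  have hr₁γ : (0:ℝ) < r₁ ^ γ := Real.rpow_pos_of_pos hr₁ γ
  have h2 : IntegrableOn (fun r₂ : ℝ => 2 * π * r₂) (Ioc 0 R) :=
    (continuous_const.mul continuous_id).integrableOn_Ioc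
  have hmono : ∀ x ∈ Ioc (0:ℝ) R,
      (k * x ^ γ / r₁ ^ γ) / (k * x ^ γ / r₁ ^ γ + 1) * (2 * π * x) ≤ 2 * π * x := by
    intro x hx
    have hX0 : (0:ℝ) ≤ k * x ^ γ / r₁ ^ γ :=
      div_nonneg (mul_nonneg hk.le (Real.rpow_nonneg hx.1.le _)) hr₁γ.le
    have hfrac : (k * x ^ γ / r₁ ^ γ) / (k * x ^ γ / r₁ ^ γ + 1) ≤ 1 := by
      rw [div_le_one (by linarith)]
      linarith
    exact mul_le_of_le_one_left (by nlinarith [hx.1, Real.pi_pos]) hfrac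
  have := setIntegral_mono_on
    (stmt2_inner_integrable γ k r₁ R hγ hk hr₁ hR) h2 measurableSet_Ioc hmono
  calc (∫ r₂ in Ioc (0:ℝ) R,
        (k * r₂ ^ γ / r₁ ^ γ) / (k * r₂ ^ γ / r₁ ^ γ + 1) * (2 * π * r₂))
      ≤ ∫ r₂ in Ioc (0:ℝ) R, 2 * π * r₂ := this
    _ = π * R ^ 2 := by
        rw [← intervalIntegral.integral_of_le hR.le, intervalIntegral.integral_const_mul,
          integral_id]
        ring

lemma stmt2_inner_le_pow (γ k r₁ R : ℝ) (hγ : 0 < γ) (hk : 0 < k) (hr₁ : 0 < r₁)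
    (hR : 0 < R) :
    (∫ r₂ in Ioc (0:ℝ) R,
      (k * r₂ ^ γ / r₁ ^ γ) / (k * r₂ ^ γ / r₁ ^ γ + 1) * (2 * π * r₂))
      ≤ 2 * π * k * R ^ (γ + 1) * R / r₁ ^ γ := by
  have hr₁γ : (0:ℝ) < r₁ ^ γ := Real.rpow_pos_of_pos hr₁ γ
  have h2 : IntegrableOn (fun _ : ℝ => 2 * π * k * R ^ (γ + 1) / r₁ ^ γ) (Ioc 0 R) :=
    integrableOn_const (by rw [Real.volume_Ioc]; exact ENNReal.ofReal_ne_top)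
  have hmono : ∀ x ∈ Ioc (0:ℝ) R,
      (k * x ^ γ / r₁ ^ γ) / (k * x ^ γ / r₁ ^ γ + 1) * (2 * π * x)
        ≤ 2 * π * k * R ^ (γ + 1) / r₁ ^ γ := by
    intro x hx
    have hX0 : (0:ℝ) ≤ k * x ^ γ / r₁ ^ γ :=
      div_nonneg (mul_nonneg hk.le (Real.rpow_nonneg hx.1.le _)) hr₁γ.le
    have hfrac : (k * x ^ γ / r₁ ^ γ) / (k * x ^ γ / r₁ ^ γ + 1) ≤ k * x ^ γ / r₁ ^ γ :=
      div_le_self hX0 (by linarith)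
    have hxγ : x ^ γ ≤ R ^ γ := Real.rpow_le_rpow hx.1.le hx.2 hγ.le
    have hRpow : R ^ (γ + 1) = R ^ γ * R := Real.rpow_add_one hR.ne' γ
    calc (k * x ^ γ / r₁ ^ γ) / (k * x ^ γ / r₁ ^ γ + 1) * (2 * π * x)
        ≤ (k * x ^ γ / r₁ ^ γ) * (2 * π * x) :=
          mul_le_mul_of_nonneg_right hfrac (by nlinarith [hx.1, Real.pi_pos])
      _ ≤ (k * R ^ γ / r₁ ^ γ) * (2 * π * R) := by
          apply mul_le_mul
          · gcongr
          · nlinarith [hx.1, hx.2, Real.pi_pos]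
          · nlinarith [hx.1, Real.pi_pos]
          · positivity
      _ = 2 * π * k * R ^ (γ + 1) / r₁ ^ γ := by rw [hRpow]; field_simp
  have := setIntegral_mono_on
    (stmt2_inner_integrable γ k r₁ R hγ hk hr₁ hR) h2 measurableSet_Ioc hmono
  calc (∫ r₂ in Ioc (0:ℝ) R,
        (k * r₂ ^ γ / r₁ ^ γ) / (k * r₂ ^ γ / r₁ ^ γ + 1) * (2 * π * r₂))
      ≤ ∫ _ in Ioc (0:ℝ) R, 2 * π * k * R ^ (γ + 1) / r₁ ^ γ := this
    _ = 2 * π * k * R ^ (γ + 1) * R / r₁ ^ γ := by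
        rw [setIntegral_const, Real.volume_real_Ioc_of_le hR.le, smul_eq_mul]
        ring

lemma stmt2_F_lower (γ k a R : ℝ) (hγ : 2 < γ) (hk : 0 < k) (hR : 0 < R) (ha0 : 0 < a)
    (haγ : a ^ γ = k) (r₁ : ℝ) (hr₁ : 0 < r₁) :
    (if r₁ ≤ a * R then
        2 * π * r₁ * (π * (r₁ / a) ^ 2 / (γ + 2) + (π * R ^ 2 / 2 - π * (r₁ / a) ^ 2 / 2))
      else 2 * π * r₁ * (π * k * R ^ (γ + 2) / ((γ + 2) * r₁ ^ γ)))
      ≤ 2 * π * r₁ *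
        ∫ r₂ in Ioc (0:ℝ) R,
          (k * r₂ ^ γ / r₁ ^ γ) / (k * r₂ ^ γ / r₁ ^ γ + 1) * (2 * π * r₂) := by
  have hγ0 : (0:ℝ) < γ := by linarith
  have hr₁γ : (0:ℝ) < r₁ ^ γ := Real.rpow_pos_of_pos hr₁ γ
  have hfac : (0:ℝ) ≤ 2 * π * r₁ := by positivity
  have hinner : (∫ r₂ in Ioc (0:ℝ) R,
      (k * r₂ ^ γ / r₁ ^ γ) / (k * r₂ ^ γ / r₁ ^ γ + 1) * (2 * π * r₂)) =
      ∫ r₂ in (0:ℝ)..R,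
      (k * r₂ ^ γ / r₁ ^ γ) / (k * r₂ ^ γ / r₁ ^ γ + 1) * (2 * π * r₂) :=
    (intervalIntegral.integral_of_le hR.le).symm
  split_ifs with hcase
  · -- r₁ ≤ a * R
    set c : ℝ := r₁ / a with hcdef
    have hc0 : 0 < c := div_pos hr₁ ha0
    have hcR : c ≤ R := by
      rw [hcdef, div_le_iff₀ ha0]
      linarith [hcase, mul_comm a R]
    have hkc : k * c ^ γ = r₁ ^ γ := by
      rw [hcdef, Real.div_rpow hr₁.le ha0.le, haγ]
      field_simp
    have I1 : IntervalIntegrable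
        (fun r₂ : ℝ => (k * r₂ ^ γ / r₁ ^ γ) / (k * r₂ ^ γ / r₁ ^ γ + 1) * (2 * π * r₂))
        volume 0 c := by
      apply (stmt2_psi_contOn γ k r₁ hγ0 hk.le hr₁ _ ?_).intervalIntegrable
      rw [Set.uIcc_of_le hc0.le]; exact fun x hx => hx.1
    have I2 : IntervalIntegrable
        (fun r₂ : ℝ => (k * r₂ ^ γ / r₁ ^ γ) / (k * r₂ ^ γ / r₁ ^ γ + 1) * (2 * π * r₂))
        volume c R := by
      apply (stmt2_psi_contOn γ k r₁ hγ0 hk.le hr₁ _ ?_).intervalIntegrable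
      rw [Set.uIcc_of_le hcR]; exact fun x hx => le_trans hc0.le hx.1
    have hsplit := intervalIntegral.integral_add_adjacent_intervals I1 I2
    have p1 := stmt2_piece1 γ k r₁ c hγ hk hr₁ hc0.le (le_of_eq hkc)
    have p2 := stmt2_piece2 γ k r₁ c R hγ0 hk hr₁ hc0 hcR (le_of_eq hkc.symm)
    have hinner_ge : π * c ^ 2 / (γ + 2) + (π * R ^ 2 / 2 - π * (c) ^ 2 / 2) ≤
        ∫ r₂ in Ioc (0:ℝ) R,
          (k * r₂ ^ γ / r₁ ^ γ) / (k * r₂ ^ γ / r₁ ^ γ + 1) * (2 * π * r₂) := by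
      rw [hinner, ← hsplit]
      have hc2 : π * k * c ^ (γ + 2) / ((γ + 2) * r₁ ^ γ) = π * c ^ 2 / (γ + 2) := by
        have : c ^ (γ + 2) = c ^ γ * c ^ 2 := by
          rw [Real.rpow_add hc0 γ 2, Real.rpow_two]
        rw [this]
        rw [show π * k * (c ^ γ * c ^ 2) = π * (k * c ^ γ) * c ^ 2 by ring, hkc]
        field_simp
      have := add_le_add p1 p2
      rw [hc2] at this
      calc π * c ^ 2 / (γ + 2) + (π * R ^ 2 / 2 - π * c ^ 2 / 2)
          = π * c ^ 2 / (γ + 2) + π * (R ^ 2 - c ^ 2) / 2 := by ring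
        _ ≤ _ := this
    exact mul_le_mul_of_nonneg_left hinner_ge hfac
  · -- r₁ > a * R
    push_neg at hcase
    have hkR : k * R ^ γ ≤ r₁ ^ γ := by
      have h1 : (a * R) ^ γ ≤ r₁ ^ γ :=
        Real.rpow_le_rpow (by positivity) hcase.le hγ0.le
      rw [Real.mul_rpow ha0.le hR.le, haγ] at h1
      exact h1
    have p1 := stmt2_piece1 γ k r₁ R hγ hk hr₁ hR.le hkR
    have hinner_ge : π * k * R ^ (γ + 2) / ((γ + 2) * r₁ ^ γ) ≤
        ∫ r₂ in Ioc (0:ℝ) R,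
          (k * r₂ ^ γ / r₁ ^ γ) / (k * r₂ ^ γ / r₁ ^ γ + 1) * (2 * π * r₂) := by
      rw [hinner]; exact p1
    exact mul_le_mul_of_nonneg_left hinner_ge hfac

set_option maxHeartbeats 1000000 in
lemma stmt2_L_val (γ k a R : ℝ) (hγ : 2 < γ) (hk : 0 < k) (hR : 0 < R) (ha0 : 0 < a)
    (haγ : a ^ γ = k) :
    IntegrableOn (fun r₁ : ℝ =>
      if r₁ ≤ a * R then
        2 * π * r₁ * (π * (r₁ / a) ^ 2 / (γ + 2) + (π * R ^ 2 / 2 - π * (r₁ / a) ^ 2 / 2))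
      else 2 * π * r₁ * (π * k * R ^ (γ + 2) / ((γ + 2) * r₁ ^ γ))) (Ioi 0) ∧
    (∫ r₁ in Ioi (0:ℝ),
      (if r₁ ≤ a * R then
        2 * π * r₁ * (π * (r₁ / a) ^ 2 / (γ + 2) + (π * R ^ 2 / 2 - π * (r₁ / a) ^ 2 / 2))
      else 2 * π * r₁ * (π * k * R ^ (γ + 2) / ((γ + 2) * r₁ ^ γ))))
      = 2 * π ^ 2 * R ^ 4 * a ^ 2 * (1/8 + 1/(4*(γ+2)) + 1/((γ+2)*(γ-2))) := by
  have hγ0 : (0:ℝ) < γ := by linarith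
  have hne2 : γ + 2 ≠ 0 := by linarith
  have hne2' : γ - 2 ≠ 0 := by linarith
  set m : ℝ := a * R with hm
  have hm0 : 0 < m := mul_pos ha0 hR
  set L : ℝ → ℝ := fun r₁ =>
      if r₁ ≤ m then
        2 * π * r₁ * (π * (r₁ / a) ^ 2 / (γ + 2) + (π * R ^ 2 / 2 - π * (r₁ / a) ^ 2 / 2))
      else 2 * π * r₁ * (π * k * R ^ (γ + 2) / ((γ + 2) * r₁ ^ γ)) with hLdef
  set C₁ : ℝ := 2 * π ^ 2 / (a ^ 2 * (γ + 2)) - π ^ 2 / a ^ 2 with hC₁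
  set C₂ : ℝ := π ^ 2 * R ^ 2 with hC₂
  set C : ℝ := 2 * π ^ 2 * k * R ^ (γ + 2) / (γ + 2) with hC
  have hEq1 : EqOn L (fun r : ℝ => C₁ * r ^ 3 + C₂ * r) (Ioc 0 m) := by
    intro r hr
    simp only [hLdef, if_pos hr.2, hC₁, hC₂]
    field_simp
    ring
  have hEq2 : EqOn L (fun r : ℝ => C * r ^ (1 - γ)) (Ioi m) := by
    intro r hr
    have hr0 : (0:ℝ) < r := lt_trans hm0 hr
    have hrγ : (0:ℝ) < r ^ γ := Real.rpow_pos_of_pos hr0 γ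
    simp only [hLdef, if_neg (not_le.mpr (mem_Ioi.mp hr)), hC]
    have hrpow : r ^ (1 - γ) = r / r ^ γ := by
      rw [Real.rpow_sub hr0, Real.rpow_one]
    rw [hrpow]
    field_simp
  have hcont : Continuous fun r : ℝ => C₁ * r ^ 3 + C₂ * r := by continuity
  have hint1 : IntegrableOn L (Ioc 0 m) :=
    (hcont.integrableOn_Ioc).congr_fun hEq1.symm measurableSet_Ioc
  have hint2 : IntegrableOn L (Ioi m) := by
    have h : IntegrableOn (fun x : ℝ => C * x ^ (1 - γ)) (Ioi m) :=
      (integrableOn_Ioi_rpow_of_lt (by linarith : 1 - γ < -1) hm0).const_mul C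
    exact h.congr_fun hEq2.symm measurableSet_Ioi
  have hsets : Ioc (0:ℝ) m ∪ Ioi m = Ioi 0 := Ioc_union_Ioi_eq_Ioi hm0.le
  have hint : IntegrableOn L (Ioi 0) := by
    rw [← hsets]
    exact hint1.union hint2
  refine ⟨hint, ?_⟩
  have hval1 : (∫ r in Ioc (0:ℝ) m, L r) = C₁ * m ^ 4 / 4 + C₂ * m ^ 2 / 2 := by
    rw [setIntegral_congr_fun measurableSet_Ioc hEq1,
      ← intervalIntegral.integral_of_le hm0.le,
      intervalIntegral.integral_add
        ((by continuity : Continuous fun x : ℝ => C₁ * x ^ 3).intervalIntegrable _ _)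
        ((by continuity : Continuous fun x : ℝ => C₂ * x).intervalIntegrable _ _),
      intervalIntegral.integral_const_mul, intervalIntegral.integral_const_mul,
      integral_pow, integral_id]
    ring
  have hval2 : (∫ r in Ioi m, L r) = C * (m ^ (2 - γ) / (γ - 2)) := by
    rw [setIntegral_congr_fun measurableSet_Ioi hEq2, integral_const_mul,
      integral_Ioi_rpow_of_lt (by linarith : 1 - γ < -1) hm0]
    rw [show (1 : ℝ) - γ + 1 = 2 - γ by ring]
    rw [show -m ^ (2 - γ) / (2 - γ) = m ^ (2 - γ) / (γ - 2) by
      rw [div_eq_div_iff (by linarith) (by linarith)]; ring]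
  have hkey : k * R ^ (γ + 2) * m ^ (2 - γ) = a ^ 2 * R ^ 4 := by
    rw [hm, Real.mul_rpow ha0.le hR.le, ← haγ]
    have h1 : a ^ γ * a ^ (2 - γ) = a ^ 2 := by
      rw [← Real.rpow_add ha0, show γ + (2 - γ) = 2 by ring, Real.rpow_two]
    have h2 : R ^ (γ + 2) * R ^ (2 - γ) = R ^ 4 := by
      rw [← Real.rpow_add hR, show γ + 2 + (2 - γ) = 4 by ring]
      rw [show (4:ℝ) = ((4:ℕ):ℝ) by norm_num, Real.rpow_natCast]
    calc a ^ γ * R ^ (γ + 2) * (a ^ (2 - γ) * R ^ (2 - γ))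
        = (a ^ γ * a ^ (2 - γ)) * (R ^ (γ + 2) * R ^ (2 - γ)) := by ring
      _ = a ^ 2 * R ^ 4 := by rw [h1, h2]
  have hsplit : (∫ r in Ioi (0:ℝ), L r) = (∫ r in Ioc (0:ℝ) m, L r) + ∫ r in Ioi m, L r := by
    rw [← hsets, setIntegral_union (Ioc_disjoint_Ioi le_rfl) measurableSet_Ioi hint1 hint2]
  rw [hsplit, hval1, hval2, hC]
  have hm4 : m ^ 4 = a ^ 4 * R ^ 4 := by rw [hm]; ring
  have hm2 : m ^ 2 = a ^ 2 * R ^ 2 := by rw [hm]; ring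
  rw [div_mul_div_comm,
    show 2 * π ^ 2 * k * R ^ (γ + 2) * m ^ (2 - γ)
      = 2 * π ^ 2 * (k * R ^ (γ + 2) * m ^ (2 - γ)) by ring,
    hkey, hm4, hm2, hC₁, hC₂]
  have ha2 : a ^ 2 ≠ 0 := by positivity
  have hne2'' : (γ + 2) * (γ - 2) ≠ 0 := mul_ne_zero hne2 hne2'
  field_simp
  ring

lemma stmt2_F_aesm (γ k R : ℝ) (hγ0 : 0 < γ) :
    AEStronglyMeasurable (fun r₁ : ℝ => 2 * π * r₁ *
      ∫ r₂ in Ioc (0:ℝ) R, (k * r₂ ^ γ / r₁ ^ γ) / (k * r₂ ^ γ / r₁ ^ γ + 1) * (2 * π * r₂))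
      (volume.restrict (Ioi 0)) := by
  have hγm : Measurable fun x : ℝ => x ^ γ := (stmt2_cont_rpow γ hγ0.le).measurable
  have h1 : StronglyMeasurable fun p : ℝ × ℝ =>
      (k * p.2 ^ γ / p.1 ^ γ) / (k * p.2 ^ γ / p.1 ^ γ + 1) * (2 * π * p.2) := by
    apply Measurable.stronglyMeasurable
    exact (((measurable_const.mul (hγm.comp measurable_snd)).div
        (hγm.comp measurable_fst)).div
      (((measurable_const.mul (hγm.comp measurable_snd)).div
        (hγm.comp measurable_fst)).add measurable_const)).mul
      (measurable_const.mul measurable_snd)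
  have h2 := h1.integral_prod_right' (ν := volume.restrict (Ioc (0:ℝ) R))
  exact ((stronglyMeasurable_const.mul stronglyMeasurable_id).mul h2).aestronglyMeasurable

lemma stmt2_U_int (γ k a R : ℝ) (hγ : 2 < γ) (hk : 0 < k) (hR : 0 < R) (ha0 : 0 < a) :
    IntegrableOn (fun r₁ : ℝ =>
      if r₁ ≤ a * R then 2 * π * r₁ * (π * R ^ 2)
      else 2 * π * r₁ * (2 * π * k * R ^ (γ + 1) * R / r₁ ^ γ)) (Ioi 0) := by
  set m : ℝ := a * R with hm
  have hm0 : 0 < m := mul_pos ha0 hR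
  set U : ℝ → ℝ := fun r₁ =>
      if r₁ ≤ m then 2 * π * r₁ * (π * R ^ 2)
      else 2 * π * r₁ * (2 * π * k * R ^ (γ + 1) * R / r₁ ^ γ) with hUdef
  have hEq1 : EqOn U (fun r : ℝ => (2 * π * (π * R ^ 2)) * r) (Ioc 0 m) := by
    intro r hr
    simp only [hUdef, if_pos hr.2]
    ring
  have hEq2 : EqOn U (fun r : ℝ => (2 * π * (2 * π * k * R ^ (γ + 1) * R)) * r ^ (1 - γ))
      (Ioi m) := by
    intro r hr
    have hr0 : (0:ℝ) < r := lt_trans hm0 hr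
    have hrγ : (0:ℝ) < r ^ γ := Real.rpow_pos_of_pos hr0 γ
    simp only [hUdef, if_neg (not_le.mpr (mem_Ioi.mp hr))]
    rw [show r ^ (1 - γ) = r / r ^ γ by rw [Real.rpow_sub hr0, Real.rpow_one]]
    field_simp
  have hint1 : IntegrableOn U (Ioc 0 m) :=
    (((continuous_const.mul continuous_id).integrableOn_Ioc).congr_fun
      hEq1.symm measurableSet_Ioc)
  have hint2 : IntegrableOn U (Ioi m) := by
    have h : IntegrableOn (fun x : ℝ => (2 * π * (2 * π * k * R ^ (γ + 1) * R)) * x ^ (1 - γ))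
        (Ioi m) :=
      (integrableOn_Ioi_rpow_of_lt (by linarith : 1 - γ < -1) hm0).const_mul _
    exact h.congr_fun hEq2.symm measurableSet_Ioi
  rw [← Ioc_union_Ioi_eq_Ioi hm0.le]
  exact hint1.union hint2

theorem stmt_2 (γ T ρ R : ℝ) (hγ : 2 < γ) (hT : 0 < T) (hρ : 0 < ρ) (hR : 0 < R) :
    2 * π ^ 2 * R ^ 4 * (T * ρ) ^ (2 / γ) *
        (1/8 + 1/(4*(γ+2)) + 1/((γ+2)*(γ-2)))
      ≤ ∫ r₁ in Set.Ioi (0:ℝ), 2 * π * r₁ *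
          ∫ r₂ in Set.Ioc (0:ℝ) R,
            (T * ρ * r₂ ^ γ / r₁ ^ γ) / (T * ρ * r₂ ^ γ / r₁ ^ γ + 1) * (2 * π * r₂) := by
  have hγ0 : (0:ℝ) < γ := by linarith
  have hk0 : 0 < T * ρ := mul_pos hT hρ
  set a : ℝ := (T * ρ) ^ (1/γ) with ha
  have ha0 : 0 < a := Real.rpow_pos_of_pos hk0 _
  have haγ : a ^ γ = T * ρ := by
    rw [ha, ← Real.rpow_mul hk0.le, one_div, inv_mul_cancel₀ hγ0.ne', Real.rpow_one]
  have ha2 : (T * ρ) ^ (2/γ) = a ^ 2 := by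
    rw [ha, show (2:ℝ)/γ = 1/γ * 2 by ring, Real.rpow_mul hk0.le, Real.rpow_two]
  obtain ⟨hLint, hLval⟩ := stmt2_L_val γ (T * ρ) a R hγ hk0 hR ha0 haγ
  -- nonnegativity of the integrand F
  have hFnonneg : ∀ r₁ ∈ Ioi (0:ℝ),
      0 ≤ 2 * π * r₁ *
        ∫ r₂ in Ioc (0:ℝ) R,
          (T * ρ * r₂ ^ γ / r₁ ^ γ) / (T * ρ * r₂ ^ γ / r₁ ^ γ + 1) * (2 * π * r₂) := by
    intro r₁ hr₁
    have hr₁0 : (0:ℝ) < r₁ := hr₁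
    have hr₁γ : (0:ℝ) < r₁ ^ γ := Real.rpow_pos_of_pos hr₁0 γ
    apply mul_nonneg (by positivity)
    apply setIntegral_nonneg measurableSet_Ioc
    intro x hx
    have hX0 : (0:ℝ) ≤ T * ρ * x ^ γ / r₁ ^ γ :=
      div_nonneg (mul_nonneg hk0.le (Real.rpow_nonneg hx.1.le _)) hr₁γ.le
    exact mul_nonneg (div_nonneg hX0 (by linarith)) (by nlinarith [hx.1, Real.pi_pos])
  -- upper bound and integrability of F
  have hFle : ∀ r₁ ∈ Ioi (0:ℝ),
      (2 * π * r₁ *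
        ∫ r₂ in Ioc (0:ℝ) R,
          (T * ρ * r₂ ^ γ / r₁ ^ γ) / (T * ρ * r₂ ^ γ / r₁ ^ γ + 1) * (2 * π * r₂))
      ≤ (if r₁ ≤ a * R then 2 * π * r₁ * (π * R ^ 2)
          else 2 * π * r₁ * (2 * π * (T * ρ) * R ^ (γ + 1) * R / r₁ ^ γ)) := by
    intro r₁ hr₁
    have hr₁0 : (0:ℝ) < r₁ := hr₁
    split_ifs with hcase
    · exact mul_le_mul_of_nonneg_left
        (stmt2_inner_le_const γ (T * ρ) r₁ R hγ0 hk0 hr₁0 hR) (by positivity)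
    · exact mul_le_mul_of_nonneg_left
        (stmt2_inner_le_pow γ (T * ρ) r₁ R hγ0 hk0 hr₁0 hR) (by positivity)
  have hFint : IntegrableOn (fun r₁ : ℝ => 2 * π * r₁ *
      ∫ r₂ in Ioc (0:ℝ) R,
        (T * ρ * r₂ ^ γ / r₁ ^ γ) / (T * ρ * r₂ ^ γ / r₁ ^ γ + 1) * (2 * π * r₂))
      (Ioi 0) := by
    apply Integrable.mono' (stmt2_U_int γ (T * ρ) a R hγ hk0 hR ha0)
      (stmt2_F_aesm γ (T * ρ) R hγ0)
    rw [ae_restrict_iff' measurableSet_Ioi]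
    filter_upwards with r₁ hr₁
    rw [Real.norm_eq_abs, abs_of_nonneg (hFnonneg r₁ hr₁)]
    exact hFle r₁ hr₁
  have hLF : ∀ r₁ ∈ Ioi (0:ℝ),
      (if r₁ ≤ a * R then
          2 * π * r₁ * (π * (r₁ / a) ^ 2 / (γ + 2) + (π * R ^ 2 / 2 - π * (r₁ / a) ^ 2 / 2))
        else 2 * π * r₁ * (π * (T * ρ) * R ^ (γ + 2) / ((γ + 2) * r₁ ^ γ)))
      ≤ 2 * π * r₁ *
        ∫ r₂ in Ioc (0:ℝ) R,
          (T * ρ * r₂ ^ γ / r₁ ^ γ) / (T * ρ * r₂ ^ γ / r₁ ^ γ + 1) * (2 * π * r₂) :=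
    fun r₁ hr₁ => stmt2_F_lower γ (T * ρ) a R hγ hk0 hR ha0 haγ r₁ hr₁
  calc 2 * π ^ 2 * R ^ 4 * (T * ρ) ^ (2 / γ) * (1/8 + 1/(4*(γ+2)) + 1/((γ+2)*(γ-2)))
      = ∫ r₁ in Ioi (0:ℝ),
          (if r₁ ≤ a * R then
            2 * π * r₁ * (π * (r₁ / a) ^ 2 / (γ + 2) + (π * R ^ 2 / 2 - π * (r₁ / a) ^ 2 / 2))
          else 2 * π * r₁ * (π * (T * ρ) * R ^ (γ + 2) / ((γ + 2) * r₁ ^ γ))) := by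
        rw [hLval, ha2]
    _ ≤ _ := setIntegral_mono_on hLint hFint measurableSet_Ioi hLF
end

section
/- Let γ > 2, T > 0, ρ > 0, R > 0. The integral ∫_0^∞ r₁ ∫_0^R (Tρ r₂^γ / r₁^γ)/(Tρ r₂^γ / r₁^γ + 1) · r₂ dr₂ dr₁ is finite. -/
open Real MeasureTheory

theorem stmt_4 (γ T ρ R : ℝ) (hγ : 2 < γ) (hT : 0 < T) (hρ : 0 < ρ) (hR : 0 < R) :
    IntegrableOn
      (fun r₁ : ℝ => r₁ * ∫ r₂ in Set.Ioc (0:ℝ) R,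
        (T * ρ * r₂ ^ γ / r₁ ^ γ) / (T * ρ * r₂ ^ γ / r₁ ^ γ + 1) * r₂)
      (Set.Ioi (0:ℝ)) := by
  have hγ0 : (0:ℝ) < γ := by linarith
  set K : ℝ := T * ρ * R ^ γ with hK
  have hK0 : 0 < K := by positivity
  set f : ℝ → ℝ := fun r₁ : ℝ => r₁ * ∫ r₂ in Set.Ioc (0:ℝ) R,
        (T * ρ * r₂ ^ γ / r₁ ^ γ) / (T * ρ * r₂ ^ γ / r₁ ^ γ + 1) * r₂ with hf
  -- measurability
  have hmeas : AEStronglyMeasurable f (volume.restrict (Set.Ioi (0:ℝ))) := by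
    have h1 : StronglyMeasurable fun p : ℝ × ℝ =>
        (T * ρ * p.2 ^ γ / p.1 ^ γ) / (T * ρ * p.2 ^ γ / p.1 ^ γ + 1) * p.2 := by
      apply Measurable.stronglyMeasurable
      fun_prop
    have h2 := h1.integral_prod_right' (ν := volume.restrict (Set.Ioc (0:ℝ) R))
    exact ((measurable_id.stronglyMeasurable.mul h2).aestronglyMeasurable).restrict
  have hvol : (volume (Set.Ioc (0:ℝ) R)).toReal = R := by
    simp [Real.volume_Ioc, ENNReal.toReal_ofReal hR.le]
  -- key norm bound
  have key : ∀ r₁ : ℝ, 0 < r₁ → ‖f r₁‖ ≤ r₁ * (min 1 (K / r₁ ^ γ) * R * R) := by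
    intro r₁ hr₁
    have hbound : ‖∫ r₂ in Set.Ioc (0:ℝ) R,
        (T * ρ * r₂ ^ γ / r₁ ^ γ) / (T * ρ * r₂ ^ γ / r₁ ^ γ + 1) * r₂‖
        ≤ min 1 (K / r₁ ^ γ) * R * R := by
      have := norm_setIntegral_le_of_norm_le_const (μ := volume)
        (s := Set.Ioc (0:ℝ) R)
        (f := fun r₂ => (T * ρ * r₂ ^ γ / r₁ ^ γ) / (T * ρ * r₂ ^ γ / r₁ ^ γ + 1) * r₂)
        (C := min 1 (K / r₁ ^ γ) * R) (by simp [Real.volume_Ioc]) ?_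
      · simpa [Real.volume_Ioc, ENNReal.toReal_ofReal hR.le, mul_assoc, max_eq_left hR.le] using this
      · intro r₂ hr₂
        obtain ⟨h0, hle⟩ := hr₂
        have hx0 : 0 ≤ T * ρ * r₂ ^ γ / r₁ ^ γ := by positivity
        have hd : (0:ℝ) < T * ρ * r₂ ^ γ / r₁ ^ γ + 1 := by linarith
        have hfrac0 : 0 ≤ (T * ρ * r₂ ^ γ / r₁ ^ γ) / (T * ρ * r₂ ^ γ / r₁ ^ γ + 1) :=
          div_nonneg hx0 hd.le
        have hfle1 : (T * ρ * r₂ ^ γ / r₁ ^ γ) / (T * ρ * r₂ ^ γ / r₁ ^ γ + 1) ≤ 1 := by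
          rw [div_le_one hd]; linarith
        have hflex : (T * ρ * r₂ ^ γ / r₁ ^ γ) / (T * ρ * r₂ ^ γ / r₁ ^ γ + 1)
            ≤ K / r₁ ^ γ := by
          calc (T * ρ * r₂ ^ γ / r₁ ^ γ) / (T * ρ * r₂ ^ γ / r₁ ^ γ + 1)
              ≤ T * ρ * r₂ ^ γ / r₁ ^ γ := by
                apply div_le_self hx0; linarith
            _ ≤ K / r₁ ^ γ := by
                apply div_le_div_of_nonneg_right _ (by positivity)
                have : r₂ ^ γ ≤ R ^ γ := Real.rpow_le_rpow h0.le hle hγ0.le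
                nlinarith [mul_pos hT hρ]
        rw [norm_mul, Real.norm_of_nonneg hfrac0, Real.norm_of_nonneg h0.le]
        exact mul_le_mul (le_min hfle1 hflex) hle h0.le
          (le_min zero_le_one (by positivity))
    calc ‖f r₁‖ = |r₁| * ‖∫ r₂ in Set.Ioc (0:ℝ) R,
        (T * ρ * r₂ ^ γ / r₁ ^ γ) / (T * ρ * r₂ ^ γ / r₁ ^ γ + 1) * r₂‖ := by
          simp [hf, abs_mul]
      _ ≤ r₁ * (min 1 (K / r₁ ^ γ) * R * R) := by
          rw [abs_of_pos hr₁]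
          exact mul_le_mul_of_nonneg_left hbound hr₁.le
  -- split the domain
  have hsplit : Set.Ioi (0:ℝ) = Set.Ioc (0:ℝ) 1 ∪ Set.Ioi 1 :=
    (Set.Ioc_union_Ioi_eq_Ioi zero_le_one).symm
  rw [hsplit]
  apply IntegrableOn.union
  · -- on (0,1]: dominated by constant R*R
    apply Integrable.mono' (g := fun _ => R * R)
      (integrableOn_const (by simp [Real.volume_Ioc]))
      (hmeas.mono_measure (Measure.restrict_mono
        (by rw [hsplit]; exact Set.subset_union_left) le_rfl))
    filter_upwards [ae_restrict_mem measurableSet_Ioc] with r₁ hr₁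
    have hr₁0 : (0:ℝ) < r₁ := hr₁.1
    have hmin0 : 0 ≤ min 1 (K / r₁ ^ γ) := le_min zero_le_one (by positivity)
    calc ‖f r₁‖ ≤ r₁ * (min 1 (K / r₁ ^ γ) * R * R) := key r₁ hr₁0
      _ ≤ 1 * (1 * R * R) := by
          apply mul_le_mul hr₁.2 _ (by positivity) zero_le_one
          apply mul_le_mul_of_nonneg_right _ hR.le
          exact mul_le_mul_of_nonneg_right (min_le_left _ _) hR.le
      _ = R * R := by ring
  · -- on (1,∞): dominated by K*R*R*r₁^(1-γ)
    apply Integrable.mono' (g := fun r₁ => K * R * R * r₁ ^ (1 - γ))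
      (((integrableOn_Ioi_rpow_of_lt (by linarith) one_pos).const_mul (K * R * R)))
      (hmeas.mono_measure (Measure.restrict_mono
        (by rw [hsplit]; exact Set.subset_union_right) le_rfl))
    filter_upwards [ae_restrict_mem measurableSet_Ioi] with r₁ hr₁
    have hr₁0 : (0:ℝ) < r₁ := lt_trans one_pos hr₁
    calc ‖f r₁‖ ≤ r₁ * (min 1 (K / r₁ ^ γ) * R * R) := key r₁ hr₁0
      _ ≤ r₁ * (K / r₁ ^ γ * R * R) := by
          apply mul_le_mul_of_nonneg_left _ hr₁0.le
          apply mul_le_mul_of_nonneg_right _ hR.le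
          exact mul_le_mul_of_nonneg_right (min_le_right _ _) hR.le
      _ = K * R * R * r₁ ^ (1 - γ) := by
          rw [Real.rpow_sub hr₁0, Real.rpow_one]
          field_simp
end
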